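/- Let p be a prime and R an additive subgroup of ℚ with 1 ∈ R such that there is no r ∈ R with p·r = 1. Let B = ⊕_ℕ R (the subgroup of finitely supported functions ℕ → ℚ all of whose values lie in R), let e_j denote the function with value 1 at j and 0 elsewhere, and let A be the subgroup of B generated by { r·e_j − (p·r)·e_{j+1} : r ∈ R, j ∈ ℕ }. Then for every type ι the quotient group B/A is not isomorphic, as an additive group, to ⊕_ι R. (Core of Lemma 5.13: the union A of the chain (A_i) is not a strong submodel of B in the class of direct sums of copies of a fixed torsion-free abelian group of rank 1 different from ℚ.) -/

import Mathlib

/-- `⊕_ι R`: the additive subgroup of the finitely supported functions `ι →₀ ℚ` consisting of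
those functions all of whose values lie in `R`. -/
noncomputable def rSum (R : AddSubgroup ℚ) (ι : Type*) : AddSubgroup (ι →₀ ℚ) where
  carrier := {f | ∀ a, f a ∈ R}
  zero_mem' := by intro a; simpa using R.zero_mem
  add_mem' := by intro f g hf hg a; simpa using R.add_mem (hf a) (hg a)
  neg_mem' := by intro f hf a; simpa using R.neg_mem (hf a)

theorem single_one_mem_rSum (R : AddSubgroup ℚ) (hR : (1 : ℚ) ∈ R) (j : ℕ) :
    Finsupp.single j (1 : ℚ) ∈ rSum R ℕ := by
  intro a
  rw [Finsupp.single_apply]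
  split
  · exact hR
  · exact R.zero_mem

/-- The subgroup of `B = ⊕_ℕ R` generated by the elements `r·e_j − (p·r)·e_{j+1}`
for `r ∈ R` and `j ∈ ℕ`. -/
noncomputable def relSubgroup (p : ℕ) (R : AddSubgroup ℚ) : AddSubgroup (rSum R ℕ) :=
  AddSubgroup.closure
    {x : rSum R ℕ | ∃ r ∈ R, ∃ j : ℕ,
      (x : ℕ →₀ ℚ) = Finsupp.single j r - Finsupp.single (j + 1) ((p : ℚ) * r)}



lemma key1 (p : ℕ) (hp : p.Prime) (R : AddSubgroup ℚ) (hR : (1:ℚ) ∈ R) :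
    ∀ n (a : ℤ), a.natAbs ≤ n → a ≠ 0 →
      (∀ k : ℕ, ∃ r ∈ R, (p:ℚ)^k * r = (a:ℚ)) → ∃ r ∈ R, (p:ℚ) * r = 1 := by
  intro n
  induction n with
  | zero =>
    intro a hle ha _
    exact absurd (Int.natAbs_eq_zero.mp (Nat.le_zero.mp hle)) ha
  | succ n ih =>
    intro a hle ha hdiv
    have hp0 : (p : ℚ) ≠ 0 := by exact_mod_cast hp.ne_zero
    by_cases hdvd : (p : ℤ) ∣ a
    · obtain ⟨b, rfl⟩ := hdvd
      have hb : b ≠ 0 := by rintro rfl; simp at ha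
      refine ih b ?_ hb ?_
      · have h1 : 1 ≤ b.natAbs := Nat.one_le_iff_ne_zero.mpr (Int.natAbs_ne_zero.mpr hb)
        have h2 : ((p:ℤ) * b).natAbs = p * b.natAbs := by
          rw [Int.natAbs_mul, Int.natAbs_natCast]
        have := hp.two_le
        nlinarith [hle, h2]
      · intro k
        obtain ⟨r, hr, hre⟩ := hdiv (k+1)
        refine ⟨r, hr, ?_⟩
        have h3 : (p:ℚ) * ((p:ℚ)^k * r) = (p:ℚ) * (b:ℚ) := by
          push_cast at hre ⊢
          rw [← hre]; ring
        exact mul_left_cancel₀ hp0 h3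
    · have hcop : IsCoprime (a : ℤ) (p : ℤ) := by
        rw [Int.isCoprime_iff_gcd_eq_one, Int.gcd]
        have hnd : ¬ (p ∣ a.natAbs) := by
          intro h
          exact hdvd (Int.dvd_natAbs.mp (Int.natCast_dvd_natCast.mpr h))
        simpa using (Nat.Coprime.symm (hp.coprime_iff_not_dvd.mpr hnd))
      obtain ⟨u, v, huv⟩ := hcop
      obtain ⟨r, hr, hre⟩ := hdiv 1
      rw [pow_one] at hre
      refine ⟨u • r + v • (1:ℚ), R.add_mem (R.zsmul_mem hr u) (R.zsmul_mem hR v), ?_⟩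
      have : ((u * a + v * p : ℤ) : ℚ) = 1 := by rw [huv]; norm_num
      push_cast at this
      rw [zsmul_eq_mul, zsmul_eq_mul]
      rw [← hre] at this
      linear_combination this


/-- The evaluation `f ↦ ∑ j, f j / p ^ j`. -/
noncomputable def phi (p : ℕ) : (ℕ →₀ ℚ) →+ ℚ :=
  Finsupp.liftAddHom fun j => AddMonoidHom.mk' (fun q => q / (p : ℚ) ^ j)
    (fun a b => add_div a b _)

lemma phi_single (p : ℕ) (j : ℕ) (q : ℚ) : phi p (Finsupp.single j q) = q / (p:ℚ) ^ j := by
  simp [phi, Finsupp.liftAddHom_apply_single]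

lemma rel_le_ker (p : ℕ) (hp : p.Prime) (R : AddSubgroup ℚ) :
    relSubgroup p R ≤ ((phi p).comp (rSum R ℕ).subtype).ker := by
  rw [relSubgroup, AddSubgroup.closure_le]
  rintro x ⟨r, hr, j, hx⟩
  have hp0 : (p : ℚ) ≠ 0 := by exact_mod_cast hp.ne_zero
  simp only [SetLike.mem_coe, AddMonoidHom.mem_ker, AddMonoidHom.comp_apply,
    AddSubgroup.coe_subtype, hx, map_sub, phi_single]
  field_simp
  ring

lemma single_mem_rSum (R : AddSubgroup ℚ) {q : ℚ} (hq : q ∈ R) (j : ℕ) :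
    Finsupp.single j q ∈ rSum R ℕ := by
  intro a
  rw [Finsupp.single_apply]
  split
  · exact hq
  · exact R.zero_mem

lemma div_step (p : ℕ) (R : AddSubgroup ℚ) :
    ∀ (f : ℕ →₀ ℚ) (hf : f ∈ rSum R ℕ),
      ∃ h : rSum R ℕ, (⟨f, hf⟩ : rSum R ℕ) - p • h ∈ relSubgroup p R := by
  intro f
  induction f using Finsupp.induction with
  | zero =>
    intro hf
    refine ⟨0, ?_⟩
    simp only [smul_zero, sub_zero]; exact (relSubgroup p R).zero_mem
  | single_add j b f hjf hb ih =>
    intro hf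
    have hf' : f ∈ rSum R ℕ := by
      intro a
      by_cases haj : a = j
      · subst haj; rw [Finsupp.notMem_support_iff.mp hjf]; exact R.zero_mem
      · have := hf a
        rwa [Finsupp.add_apply, Finsupp.single_apply, if_neg (Ne.symm haj), zero_add] at this
    have hbR : b ∈ R := by
      have := hf j
      rwa [Finsupp.add_apply, Finsupp.single_apply, if_pos rfl,
        Finsupp.notMem_support_iff.mp hjf, add_zero] at this
    obtain ⟨h, hh⟩ := ih hf'
    refine ⟨h + ⟨Finsupp.single (j+1) b, single_mem_rSum R hbR (j+1)⟩, ?_⟩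
    have hmem : Finsupp.single j b - Finsupp.single (j+1) ((p:ℚ) * b) ∈ rSum R ℕ :=
      (rSum R ℕ).sub_mem (single_mem_rSum R hbR j)
        (single_mem_rSum R (by simpa [nsmul_eq_mul] using R.nsmul_mem hbR p) (j+1))
    have hgen : (⟨Finsupp.single j b - Finsupp.single (j+1) ((p:ℚ) * b), hmem⟩ :
        rSum R ℕ) ∈ relSubgroup p R :=
      AddSubgroup.subset_closure ⟨b, hbR, j, rfl⟩
    have key : (⟨Finsupp.single j b + f, hf⟩ : rSum R ℕ) -
        p • (h + ⟨Finsupp.single (j+1) b, single_mem_rSum R hbR (j+1)⟩) =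
        (⟨Finsupp.single j b - Finsupp.single (j+1) ((p:ℚ) * b), hmem⟩ : rSum R ℕ) +
        ((⟨f, hf'⟩ : rSum R ℕ) - p • h) := by
      have coe_smul : ∀ x : rSum R ℕ, ((p • x : rSum R ℕ) : ℕ →₀ ℚ) = p • (x : ℕ →₀ ℚ) :=
        fun x => rfl
      ext a
      simp only [coe_smul, AddSubgroup.coe_add, AddSubgroup.coe_sub, SetLike.val_smul,
        Finsupp.add_apply, Finsupp.sub_apply, Finsupp.smul_apply, Finsupp.single_apply,
        smul_eq_mul, nsmul_eq_mul]
      split_ifs <;> ring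
    rw [key]
    exact (relSubgroup p R).add_mem hgen hh


/-- if `1 ∈ R ≤ ℚ` and `1/p ∉ R`, then the quotient of `B = ⊕_ℕ R` by the
subgroup `A` generated by the elements `r·e_j − (p·r)·e_{j+1}` is not isomorphic, as an
additive group, to any direct sum `⊕_ι R` of copies of `R`. -/
theorem statement18 (p : ℕ) (hp : p.Prime) (R : AddSubgroup ℚ) (hR : (1 : ℚ) ∈ R)
    (hp1 : ¬ ∃ r ∈ R, (p : ℚ) * r = 1) (ι : Type*) :
    ¬ Nonempty (((rSum R ℕ) ⧸ relSubgroup p R) ≃+ rSum R ι) := by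
  rintro ⟨e⟩
  have hp0 : (p : ℚ) ≠ 0 := by exact_mod_cast hp.ne_zero
  -- every element of the quotient is divisible by p
  have hdiv1 : ∀ x : (rSum R ℕ) ⧸ relSubgroup p R, ∃ y, p • y = x := by
    intro x
    obtain ⟨g, rfl⟩ := QuotientAddGroup.mk_surjective x
    obtain ⟨h, hh⟩ := div_step p R g.1 g.2
    refine ⟨QuotientAddGroup.mk h, ?_⟩
    have h1 : (p • QuotientAddGroup.mk h : (rSum R ℕ) ⧸ relSubgroup p R) =
        QuotientAddGroup.mk (p • h) :=
      (map_nsmul (QuotientAddGroup.mk' (relSubgroup p R)) p h).symm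
    rw [h1, QuotientAddGroup.eq_iff_sub_mem]
    rw [show p • h - g = -(g - p • h) from (neg_sub g (p • h)).symm]
    exact (relSubgroup p R).neg_mem hh
  have hdivk : ∀ (k : ℕ) (x : (rSum R ℕ) ⧸ relSubgroup p R), ∃ y, p ^ k • y = x := by
    intro k
    induction k with
    | zero => intro x; exact ⟨x, by simp⟩
    | succ k ih =>
      intro x
      obtain ⟨y, hy⟩ := hdiv1 x
      obtain ⟨z, hz⟩ := ih y
      refine ⟨z, ?_⟩
      rw [pow_succ, mul_comm, mul_smul, hz, hy]
  -- the class of e₀ is nonzero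
  set x0 : (rSum R ℕ) ⧸ relSubgroup p R :=
    QuotientAddGroup.mk ⟨Finsupp.single 0 1, single_one_mem_rSum R hR 0⟩ with hx0def
  have hx0 : x0 ≠ 0 := by
    intro h0
    rw [hx0def, QuotientAddGroup.eq_zero_iff] at h0
    have := rel_le_ker p hp R h0
    rw [AddMonoidHom.mem_ker, AddMonoidHom.comp_apply] at this
    simp only [AddSubgroup.coe_subtype] at this
    rw [phi_single] at this
    norm_num at this
  -- transfer to rSum R ι
  set f : rSum R ι := e x0 with hfdef
  have hf : f ≠ 0 := by
    intro h0
    apply hx0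
    apply e.injective
    rw [← hfdef, h0, e.map_zero]
  have hf1 : (f : ι →₀ ℚ) ≠ 0 := fun h => hf (Subtype.ext h)
  obtain ⟨a, ha⟩ : ∃ a, (f : ι →₀ ℚ) a ≠ 0 := by
    by_contra hc
    push_neg at hc
    exact hf1 (Finsupp.ext fun a => by simpa using hc a)
  set q : ℚ := (f : ι →₀ ℚ) a with hqdef
  have hqR : q ∈ R := f.2 a
  have hdivq : ∀ k : ℕ, ∃ r ∈ R, (p:ℚ)^k * r = q := by
    intro k
    obtain ⟨y, hy⟩ := hdivk k x0
    have h1 : p ^ k • e y = f := by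
      have h1' : e.toAddMonoidHom (p ^ k • y) = p ^ k • e.toAddMonoidHom y :=
        map_nsmul e.toAddMonoidHom (p ^ k) y
      have h1'' : e (p ^ k • y) = p ^ k • e y := h1'
      rw [← h1'', hy, hfdef]
    refine ⟨((e y : rSum R ι) : ι →₀ ℚ) a, (e y).2 a, ?_⟩
    have h2 : ((p ^ k • e y : rSum R ι) : ι →₀ ℚ) a = q := by rw [h1, hqdef]
    have h3 : ((p ^ k • e y : rSum R ι) : ι →₀ ℚ) a
        = p ^ k • (((e y : rSum R ι) : ι →₀ ℚ) a) := rfl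
    rw [h3] at h2
    rw [← h2, nsmul_eq_mul]
    push_cast
    ring
  -- reduce to the integer numerator
  have hnum : (q.num : ℚ) ≠ 0 := by
    exact_mod_cast Rat.num_ne_zero.mpr ha
  have hdenq : (q.den : ℚ) * q = (q.num : ℚ) := by
    rw [mul_comm, Rat.mul_den_eq_num]
  have hdiva : ∀ k : ℕ, ∃ r ∈ R, (p:ℚ)^k * r = (q.num : ℚ) := by
    intro k
    obtain ⟨r, hr, hre⟩ := hdivq k
    refine ⟨q.den • r, R.nsmul_mem hr q.den, ?_⟩
    rw [nsmul_eq_mul, ← hdenq, ← hre]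
    ring
  exact hp1 (key1 p hp R hR q.num.natAbs q.num le_rfl
    (by exact_mod_cast hnum) hdiva)
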